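/- arXiv:2012.02739 — 2 statements merged into one kernel-verified Lean document; each statement's English description precedes it below -/
import Mathlib

section
/- Let A be a commutative Q-algebra and K = A[x₁,…,x_N] ⊗ Λ(y₁,…,y_N) with differential d given by multiplication by Σᵢ xᵢ yᵢ. Then the element y₁ y₂ ⋯ y_N lies in the kernel of d but not in the image of d. -/
open MvPolynomial Finset

noncomputable section

/-- Model of `A[x₁,…,x_N] ⊗ Λ(y₁,…,y_N)`: a family of polynomial coefficients
indexed by exterior monomials `y_S`, `S ⊆ {1,…,N}`. -/
abbrev Kos (A : Type) [CommRing A] (N : ℕ) : Type :=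
  Finset (Fin N) → MvPolynomial (Fin N) A

/-- Koszul sign `(-1)^{#{j ∈ S : j < i}}` for inserting/removing `yᵢ` in `y_S`. -/
def insSgn {N : ℕ} (i : Fin N) (S : Finset (Fin N)) : ℤ :=
  (-1) ^ (S.filter (· < i)).card

/-- Multiplication by the element `∑ᵢ xᵢ ⊗ yᵢ` (raises exterior degree by 1). -/
def kosD {A : Type} [CommRing A] {N : ℕ} (f : Kos A N) : Kos A N :=
  fun S => ∑ i ∈ S, insSgn i (S.erase i) • (X i * f (S.erase i))

/-- `y₁⋯y_N` is a cycle for `d` but not a boundary. -/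
theorem stmt_3 (A : Type) [CommRing A] [Nontrivial A] [Algebra ℚ A] (N : ℕ)
    (top : Kos A N) (htop : top = fun S => if S = Finset.univ then 1 else 0) :
    kosD top = 0 ∧ ¬ ∃ g : Kos A N, kosD g = top := by
  subst htop
  constructor
  · funext S
    simp only [kosD]
    apply Finset.sum_eq_zero
    intro i hi
    have hne : ¬ (S.erase i = Finset.univ) := by
      intro h
      exact Finset.notMem_erase i S (h ▸ Finset.mem_univ i)
    simp [hne]
  · rintro ⟨g, hg⟩
    have h := congrFun hg Finset.univ
    simp only [kosD, if_pos rfl] at h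
    have h2 := congrArg MvPolynomial.constantCoeff h
    simp only [map_sum, map_zsmul, map_mul, MvPolynomial.constantCoeff_X,
      zero_mul, smul_zero, Finset.sum_const_zero, map_one] at h2
    simp at h2
end
end

section
/- Let A be a commutative ring and K = A[x₁,…,x_N] ⊗ Λ(y₁,…,y_N) with d : K → K given by multiplication by Σᵢ xᵢ yᵢ. Then the kernel of d equals the ideal of K generated by the two elements Σᵢ xᵢ yᵢ and y₁⋯y_N, provided A is a Q-algebra. -/
open MvPolynomial Finset

noncomputable section

/-! ### Auxiliary machinery -/

section Aux

variable {A : Type} [CommRing A] {N : ℕ}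

/-- The contraction homotopy `∑ⱼ ∂/∂xⱼ ∘ ιⱼ` (lowers exterior degree by 1). -/
def kosH (f : Kos A N) : Kos A N :=
  fun S => ∑ j ∈ Sᶜ, insSgn j S • (pderiv j (f (insert j S)) : MvPolynomial (Fin N) A)

/-- Degree of a monomial exponent. -/
def mdeg {N : ℕ} (μ : Fin N →₀ ℕ) : ℕ := ∑ j, μ j

/-- The weight `1/(N + m - q)` (interpreted as `0` when `N + m = q`). -/
def wt (N m q : ℕ) : ℚ := ((N : ℚ) + m - q)⁻¹

/-- Rescaling each monomial of `x`-degree `m` (at exterior degree `q`) by `wt N m q`. -/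
def phi [Algebra ℚ A] (q : ℕ) (r : MvPolynomial (Fin N) A) : MvPolynomial (Fin N) A :=
  ∑ μ ∈ r.support, monomial μ (wt N (mdeg μ) q • coeff μ r)

/-! #### Sign lemmas -/

lemma insSgn_mul_self (i : Fin N) (T : Finset (Fin N)) : insSgn i T * insSgn i T = 1 := by
  unfold insSgn
  rw [← pow_add]
  exact Even.neg_one_pow ⟨_, rfl⟩

lemma insSgn_insert {i j : Fin N} (U : Finset (Fin N)) (hi : i ∉ U) (hij : i ≠ j) :
    insSgn j (insert i U) = (if i < j then -1 else 1) * insSgn j U := by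
  unfold insSgn
  rw [filter_insert]
  split_ifs with h
  · rw [card_insert_of_notMem (fun hm => hi (mem_filter.1 hm).1), pow_succ]
    ring
  · rw [one_mul]

lemma sign_lemma1 {i j : Fin N} (U : Finset (Fin N)) (hi : i ∉ U) (hj : j ∉ U) (hij : i ≠ j) :
    insSgn i U * insSgn j U = -(insSgn j (insert i U) * insSgn i (insert j U)) := by
  rw [insSgn_insert U hi hij, insSgn_insert U hj hij.symm]
  rcases hij.lt_or_gt with h | h
  · rw [if_pos h, if_neg (asymm h)]; ring
  · rw [if_neg (asymm h), if_pos h]; ring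

lemma sign_lemma2 {i j : Fin N} (U : Finset (Fin N)) (hi : i ∉ U) (hj : j ∉ U) (hij : i ≠ j) :
    insSgn i (insert j U) * insSgn j U = -(insSgn j (insert i U) * insSgn i U) := by
  rw [insSgn_insert U hj hij.symm, insSgn_insert U hi hij]
  rcases hij.lt_or_gt with h | h
  · rw [if_pos h, if_neg (asymm h)]; ring
  · rw [if_neg (asymm h), if_pos h]; ring

/-! #### Combinatorial lemmas -/

lemma sum_erase_antisymm {ι M : Type*} [DecidableEq ι] [AddCommGroup M] (S : Finset ι)
    (F : ι → ι → M) (h : ∀ i ∈ S, ∀ j ∈ S, i ≠ j → F i j = -F j i) :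
    ∑ i ∈ S, ∑ j ∈ S.erase i, F i j = 0 := by
  induction S using Finset.induction_on with
  | empty => simp
  | @insert a S' ha IH =>
    have key : ∀ i ∈ S', (insert a S').erase i = insert a (S'.erase i) := by
      intro i hi
      have hai : a ≠ i := fun he => ha (he ▸ hi)
      ext x
      simp only [mem_erase, mem_insert]
      constructor
      · rintro ⟨hx, h1 | h2⟩
        · exact Or.inl h1
        · exact Or.inr ⟨hx, h2⟩
      · rintro (h1 | ⟨hx, h2⟩)
        · exact ⟨by subst h1; exact hai.symm ∘ Eq.symm, Or.inl h1⟩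
        · exact ⟨hx, Or.inr h2⟩
    have step : ∑ i ∈ S', ∑ j ∈ (insert a S').erase i, F i j
        = ∑ i ∈ S', (F i a + ∑ j ∈ S'.erase i, F i j) :=
      Finset.sum_congr rfl fun i hi => by
        rw [key i hi, Finset.sum_insert (fun hm => ha (Finset.mem_erase.1 hm).2)]
    rw [Finset.sum_insert ha, Finset.erase_insert ha, step, Finset.sum_add_distrib,
      IH (fun i hi j hj hij =>
        h i (Finset.mem_insert_of_mem hi) j (Finset.mem_insert_of_mem hj) hij)]
    have h1 : ∑ i ∈ S', F i a = -∑ j ∈ S', F a j := by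
      rw [← Finset.sum_neg_distrib]
      refine Finset.sum_congr rfl fun i hi => ?_
      rw [h i (Finset.mem_insert_of_mem hi) a (Finset.mem_insert_self a S')
        (fun he => ha (he ▸ hi))]
    rw [h1]
    abel

lemma insert_erase_comm' {i j : Fin N} (S : Finset (Fin N)) (hi : i ∈ S) (hj : j ∉ S) :
    (insert j S).erase i = insert j (S.erase i) := by
  have hij : i ≠ j := fun he => hj (he ▸ hi)
  ext x
  simp only [Finset.mem_erase, Finset.mem_insert]
  constructor
  · rintro ⟨hx, h1 | h2⟩
    · exact Or.inl h1
    · exact Or.inr ⟨hx, h2⟩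
  · rintro (h1 | ⟨hx, h2⟩)
    · exact ⟨by rw [h1]; exact hij.symm, Or.inl h1⟩
    · exact ⟨hx, Or.inr h2⟩

/-! #### Basic properties of `kosD` -/

lemma kosD_add (f g : Kos A N) : kosD (f + g) = kosD f + kosD g := by
  funext S
  simp [kosD, mul_add, smul_add, Finset.sum_add_distrib]

lemma kosD_top (p : MvPolynomial (Fin N) A) :
    kosD (fun S => if S = Finset.univ then p else 0) = 0 := by
  funext S
  have : ∀ i ∈ S, (S.erase i) ≠ Finset.univ := by
    intro i _ he
    have := Finset.mem_univ i
    rw [← he] at this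
    exact (Finset.notMem_erase i S) this
  simp only [kosD]
  rw [Finset.sum_congr rfl fun i hi => by rw [if_neg (this i hi)]]
  simp

lemma kosD_kosD (g : Kos A N) : kosD (kosD g) = 0 := by
  funext S
  show ∑ i ∈ S, insSgn i (S.erase i) •
    (X i * ∑ j ∈ S.erase i, insSgn j ((S.erase i).erase j) • (X j * g ((S.erase i).erase j))) = _
  have expand : ∀ i ∈ S, insSgn i (S.erase i) •
      (X i * ∑ j ∈ S.erase i, insSgn j ((S.erase i).erase j) • (X j * g ((S.erase i).erase j)))
      = ∑ j ∈ S.erase i, (insSgn i (S.erase i) * insSgn j ((S.erase i).erase j)) •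
          (X i * (X j * g ((S.erase i).erase j))) := by
    intro i _
    rw [Finset.mul_sum, Finset.smul_sum]
    exact Finset.sum_congr rfl fun j _ => by
      rw [mul_smul_comm, smul_smul]
  rw [Finset.sum_congr rfl expand]
  rw [sum_erase_antisymm]
  · rfl
  intro i hi j hj hij
  have hjei : j ∈ S.erase i := Finset.mem_erase.2 ⟨hij.symm, hj⟩
  have hiej : i ∈ S.erase j := Finset.mem_erase.2 ⟨hij, hi⟩
  set U := (S.erase i).erase j with hU
  have hU' : (S.erase j).erase i = U := Finset.erase_right_comm
  have h1 : S.erase i = insert j U := (Finset.insert_erase hjei).symm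
  have h2 : S.erase j = insert i U := by rw [← hU']; exact (Finset.insert_erase hiej).symm
  have hiU : i ∉ U := fun hm => (Finset.mem_erase.1 (Finset.mem_erase.1 hm).2).1 rfl
  have hjU : j ∉ U := Finset.notMem_erase j _
  rw [h1, h2]
  have harg2 : (insert i U).erase i = U := Finset.erase_insert hiU
  rw [harg2, sign_lemma2 U hiU hjU hij, neg_smul, neg_inj,
    mul_left_comm (X i : MvPolynomial (Fin N) A)]

/-! #### Properties of `phi` -/

variable [Algebra ℚ A]

lemma coeff_phi (q : ℕ) (r : MvPolynomial (Fin N) A) (ν : Fin N →₀ ℕ) :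
    coeff ν (phi q r) = wt N (mdeg ν) q • coeff ν r := by
  rw [phi, coeff_sum]
  rw [Finset.sum_congr rfl fun μ _ => coeff_monomial ν μ _]
  rw [Finset.sum_ite_eq']
  by_cases h : ν ∈ r.support
  · rw [if_pos h]
  · rw [if_neg h, notMem_support_iff.1 h, smul_zero]

lemma phi_zero (q : ℕ) : phi q (0 : MvPolynomial (Fin N) A) = 0 := by
  apply MvPolynomial.ext; intro ν; rw [coeff_phi]; simp

lemma phi_monomial (q : ℕ) (μ : Fin N →₀ ℕ) (a : A) :
    phi q (monomial μ a) = monomial μ (wt N (mdeg μ) q • a) := by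
  apply MvPolynomial.ext; intro ν
  rw [coeff_phi, coeff_monomial, coeff_monomial]
  split_ifs with h
  · rw [h]
  · rw [smul_zero]

lemma phi_add (q : ℕ) (r s : MvPolynomial (Fin N) A) :
    phi q (r + s) = phi q r + phi q s := by
  apply MvPolynomial.ext; intro ν
  rw [coeff_add, coeff_phi, coeff_phi, coeff_phi, coeff_add, smul_add]

lemma phi_zsmul (q : ℕ) (z : ℤ) (r : MvPolynomial (Fin N) A) :
    phi q (z • r) = z • phi q r := by
  apply MvPolynomial.ext; intro ν
  rw [coeff_phi]
  simp only [MvPolynomial.coeff_smul, coeff_phi]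
  rw [smul_comm]

lemma mdeg_add (μ ν : Fin N →₀ ℕ) : mdeg (μ + ν) = mdeg μ + mdeg ν := by
  simp [mdeg, Finset.sum_add_distrib]

lemma mdeg_single (i : Fin N) : mdeg (Finsupp.single i 1) = 1 := by
  simp [mdeg, Finsupp.single_apply]

omit [Algebra ℚ A] in
lemma X_mul_monomial' (i : Fin N) (μ : Fin N →₀ ℕ) (a : A) :
    (X i : MvPolynomial (Fin N) A) * monomial μ a = monomial (μ + Finsupp.single i 1) a := by
  rw [X, monomial_mul, one_mul, add_comm]

lemma phi_X_mul (q : ℕ) (i : Fin N) (r : MvPolynomial (Fin N) A) :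
    phi (q + 1) (X i * r) = X i * phi q r := by
  induction r using MvPolynomial.induction_on' with
  | monomial μ a =>
    rw [X_mul_monomial', phi_monomial, phi_monomial, X_mul_monomial']
    congr 2
    rw [mdeg_add, mdeg_single, wt]
    rw [wt]
    push_cast
    ring_nf
  | add p s hp hs =>
    rw [mul_add, phi_add, phi_add, hp, hs, mul_add]

lemma kosD_phi (f : Kos A N) (S : Finset (Fin N)) :
    kosD (fun T => phi T.card (f T)) S = phi S.card (kosD f S) := by
  show ∑ i ∈ S, insSgn i (S.erase i) • (X i * phi (S.erase i).card (f (S.erase i)))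
      = phi S.card (∑ i ∈ S, insSgn i (S.erase i) • (X i * f (S.erase i)))
  have : ∀ q (s : Finset (Fin N)) (g : Fin N → MvPolynomial (Fin N) A),
      phi q (∑ i ∈ s, g i) = ∑ i ∈ s, phi q (g i) := by
    intro q s g
    induction s using Finset.induction_on with
    | empty => simp [phi_zero]
    | @insert a s' ha IH => rw [Finset.sum_insert ha, Finset.sum_insert ha, phi_add, IH]
  rw [this]
  refine Finset.sum_congr rfl fun i hi => ?_
  rw [phi_zsmul]
  congr 1
  have hc : S.card = (S.erase i).card + 1 := (Finset.card_erase_add_one hi).symm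
  rw [hc, phi_X_mul]

/-! #### The Euler identity for `phi` -/

omit [Algebra ℚ A] in
lemma X_mul_pderiv_monomial (j : Fin N) (μ : Fin N →₀ ℕ) (a : A) :
    (X j : MvPolynomial (Fin N) A) * pderiv j (monomial μ a) = μ j • monomial μ a := by
  rw [pderiv_monomial]
  by_cases h : μ j = 0
  · rw [h]; simp
  · have hsub : μ - Finsupp.single j 1 + Finsupp.single j 1 = μ := by
      ext k
      rw [Finsupp.add_apply, Finsupp.tsub_apply, Finsupp.single_apply]
      by_cases hk : j = k
      · subst hk
        split_ifs with h2
        · omega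
        · exact absurd rfl h2
      · simp [hk]
    rw [X_mul_monomial', hsub, smul_monomial]
    congr 1
    rw [nsmul_eq_mul, mul_comm]

omit [Algebra ℚ A] in
lemma sum_X_mul_pderiv_monomial (μ : Fin N →₀ ℕ) (a : A) :
    ∑ j, (X j : MvPolynomial (Fin N) A) * pderiv j (monomial μ a) = mdeg μ • monomial μ a := by
  rw [Finset.sum_congr rfl fun j _ => X_mul_pderiv_monomial j μ a, mdeg, ← Finset.sum_smul]

lemma euler_phi (S : Finset (Fin N)) (r : MvPolynomial (Fin N) A) :
    Sᶜ.card • phi S.card r + ∑ j, (X j : MvPolynomial (Fin N) A) * pderiv j (phi S.card r)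
      = r - (if S = Finset.univ then C (constantCoeff r) else 0) := by
  induction r using MvPolynomial.induction_on' with
  | add p s hp hs =>
    rw [phi_add]
    rw [Finset.sum_congr rfl fun j (_ : j ∈ Finset.univ) => by
      rw [map_add (pderiv j), mul_add]]
    rw [Finset.sum_add_distrib, smul_add, map_add, map_add]
    have hsplit : (if S = univ then (C (constantCoeff p) : MvPolynomial (Fin N) A)
          + C (constantCoeff s) else 0)
        = (if S = univ then (C (constantCoeff p) : MvPolynomial (Fin N) A) else 0)
          + (if S = univ then (C (constantCoeff s) : MvPolynomial (Fin N) A) else 0) := by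
      split_ifs <;> simp
    rw [hsplit]
    calc Sᶜ.card • phi S.card p + Sᶜ.card • phi S.card s
          + (∑ j, X j * pderiv j (phi S.card p) + ∑ j, X j * pderiv j (phi S.card s))
        = (Sᶜ.card • phi S.card p + ∑ j, X j * pderiv j (phi S.card p))
          + (Sᶜ.card • phi S.card s + ∑ j, X j * pderiv j (phi S.card s)) := by abel
      _ = _ := by rw [hp, hs]; abel
  | monomial μ a =>
    rw [phi_monomial]
    rw [sum_X_mul_pderiv_monomial]
    have hcard : (Sᶜ.card : ℚ) = (N : ℚ) - S.card := by
      rw [Finset.card_compl, Fintype.card_fin,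
        Nat.cast_sub (le_trans (Finset.card_le_univ S) (by simp))]
    by_cases hz : Sᶜ.card + mdeg μ = 0
    · obtain ⟨h1, h2⟩ := Nat.add_eq_zero.1 hz
      have hS : S = Finset.univ := by
        rwa [Finset.card_eq_zero, Finset.compl_eq_empty_iff] at h1
      have hμ : μ = 0 := by
        have := (Finset.sum_eq_zero_iff).1 h2
        ext k; exact this k (Finset.mem_univ k)
      subst hS hμ
      have hw : wt N (mdeg (0 : Fin N →₀ ℕ)) (Finset.univ : Finset (Fin N)).card = 0 := by
        simp [wt, mdeg, Finset.card_univ]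
      rw [hw, zero_smul, (monomial 0).map_zero]
      simp [constantCoeff_monomial]
    · have hμ0 : S = Finset.univ → μ ≠ 0 := by
        intro hS hm
        apply hz
        subst hS hm
        simp [mdeg]
      have hrhs : (if S = Finset.univ then (C (constantCoeff (monomial μ a)) :
          MvPolynomial (Fin N) A) else 0) = 0 := by
        split_ifs with h
        · rw [constantCoeff_monomial, if_neg (hμ0 h), map_zero]
        · rfl
      rw [hrhs, sub_zero]
      rw [smul_monomial, smul_monomial, ← (monomial μ).map_add]
      have key : (Sᶜ.card • wt N (mdeg μ) S.card • a) + mdeg μ • wt N (mdeg μ) S.card • a = a := by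
        rw [← Nat.cast_smul_eq_nsmul ℚ Sᶜ.card, ← Nat.cast_smul_eq_nsmul ℚ (mdeg μ),
          smul_smul, smul_smul, ← add_smul]
        have : ((Sᶜ.card : ℚ) * wt N (mdeg μ) S.card + (mdeg μ : ℚ) * wt N (mdeg μ) S.card)
            = 1 := by
          rw [← add_mul, wt]
          have hne : ((Sᶜ.card : ℚ) + mdeg μ) ≠ 0 := by
            have := Nat.cast_ne_zero (R := ℚ).2 hz
            push_cast at this
            exact this
          have heq : ((N : ℚ) + mdeg μ - S.card) = (Sᶜ.card : ℚ) + mdeg μ := by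
            rw [hcard]; ring
          rw [heq, mul_inv_cancel₀ hne]
        rw [this, one_smul]
      rw [key]

/-! #### The homotopy identity -/

omit [Algebra ℚ A] in
lemma homotopy (f : Kos A N) (S : Finset (Fin N)) :
    kosD (kosH f) S + kosH (kosD f) S
      = Sᶜ.card • f S + ∑ j, (X j : MvPolynomial (Fin N) A) * pderiv j (f S) := by
  have hA : kosD (kosH f) S
      = ∑ i ∈ S, ((X i : MvPolynomial (Fin N) A) * pderiv i (f S)
          + ∑ j ∈ Sᶜ, (insSgn i (S.erase i) * insSgn j (S.erase i)) •
              ((X i : MvPolynomial (Fin N) A) * pderiv j (f (insert j (S.erase i))))) := by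
    refine Finset.sum_congr rfl fun i hi => ?_
    show insSgn i (S.erase i) • ((X i : MvPolynomial (Fin N) A) *
        ∑ j ∈ (S.erase i)ᶜ, insSgn j (S.erase i) • (pderiv j (f (insert j (S.erase i))) :
          MvPolynomial (Fin N) A)) = _
    rw [Finset.compl_erase, Finset.sum_insert (by simp [hi] : i ∉ Sᶜ)]
    rw [mul_add, smul_add, Finset.mul_sum, Finset.smul_sum]
    congr 1
    · rw [Finset.insert_erase hi, mul_smul_comm, smul_smul, insSgn_mul_self, one_smul]
    · exact Finset.sum_congr rfl fun j _ => by rw [mul_smul_comm, smul_smul]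
  have hB : kosH (kosD f) S
      = ∑ j ∈ Sᶜ, ((f S + (X j : MvPolynomial (Fin N) A) * pderiv j (f S))
          + ∑ i ∈ S, (insSgn j S * insSgn i (insert j (S.erase i))) •
              ((X i : MvPolynomial (Fin N) A) * pderiv j (f (insert j (S.erase i))))) := by
    refine Finset.sum_congr rfl fun j hj => ?_
    have hjS : j ∉ S := by simpa using hj
    show insSgn j S • (pderiv j (∑ i ∈ insert j S, insSgn i ((insert j S).erase i) •
        ((X i : MvPolynomial (Fin N) A) * f ((insert j S).erase i))) :
          MvPolynomial (Fin N) A) = _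
    rw [Finset.sum_insert hjS, Finset.erase_insert hjS, map_add, map_zsmul, smul_add,
      smul_smul, insSgn_mul_self, one_smul]
    congr 1
    · rw [pderiv_mul, pderiv_X_self, one_mul]
    · rw [map_sum, Finset.smul_sum]
      refine Finset.sum_congr rfl fun i hi => ?_
      have hij : i ≠ j := fun he => hjS (he ▸ hi)
      rw [insert_erase_comm' S hi hjS, map_zsmul, smul_smul]
      congr 1
      rw [pderiv_mul, pderiv_X_of_ne hij, zero_mul, zero_add]
  rw [hA, hB, Finset.sum_add_distrib, Finset.sum_add_distrib, Finset.sum_add_distrib,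
    Finset.sum_const, ← Finset.sum_add_sum_compl S (fun j => (X j : MvPolynomial (Fin N) A)
      * pderiv j (f S))]
  have hC : (∑ i ∈ S, ∑ j ∈ Sᶜ, (insSgn i (S.erase i) * insSgn j (S.erase i)) •
        ((X i : MvPolynomial (Fin N) A) * pderiv j (f (insert j (S.erase i)))))
      + (∑ j ∈ Sᶜ, ∑ i ∈ S, (insSgn j S * insSgn i (insert j (S.erase i))) •
        ((X i : MvPolynomial (Fin N) A) * pderiv j (f (insert j (S.erase i))))) = 0 := by
    rw [Finset.sum_comm (s := Sᶜ)]
    rw [← Finset.sum_add_distrib]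
    refine Finset.sum_eq_zero fun i hi => ?_
    rw [← Finset.sum_add_distrib]
    refine Finset.sum_eq_zero fun j hj => ?_
    rw [← add_smul]
    have hjS : j ∉ S := by simpa using hj
    have hij : i ≠ j := fun he => hjS (he ▸ hi)
    have h1 := sign_lemma1 (S.erase i) (Finset.notMem_erase i S)
      (fun hm => hjS (Finset.mem_erase.1 hm).2) hij
    rw [Finset.insert_erase hi] at h1
    rw [h1, neg_add_cancel, zero_smul]
  calc ∑ i ∈ S, (X i : MvPolynomial (Fin N) A) * pderiv i (f S)
        + (∑ i ∈ S, ∑ j ∈ Sᶜ, (insSgn i (S.erase i) * insSgn j (S.erase i)) •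
            ((X i : MvPolynomial (Fin N) A) * pderiv j (f (insert j (S.erase i)))))
        + (Sᶜ.card • f S + ∑ j ∈ Sᶜ, (X j : MvPolynomial (Fin N) A) * pderiv j (f S)
          + ∑ j ∈ Sᶜ, ∑ i ∈ S, (insSgn j S * insSgn i (insert j (S.erase i))) •
            ((X i : MvPolynomial (Fin N) A) * pderiv j (f (insert j (S.erase i)))))
      = Sᶜ.card • f S + (∑ i ∈ S, (X i : MvPolynomial (Fin N) A) * pderiv i (f S)
          + ∑ j ∈ Sᶜ, (X j : MvPolynomial (Fin N) A) * pderiv j (f S))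
        + ((∑ i ∈ S, ∑ j ∈ Sᶜ, (insSgn i (S.erase i) * insSgn j (S.erase i)) •
            ((X i : MvPolynomial (Fin N) A) * pderiv j (f (insert j (S.erase i)))))
          + (∑ j ∈ Sᶜ, ∑ i ∈ S, (insSgn j S * insSgn i (insert j (S.erase i))) •
            ((X i : MvPolynomial (Fin N) A) * pderiv j (f (insert j (S.erase i)))))) := by
        abel
    _ = _ := by rw [hC, add_zero]

end Aux

/-- the kernel of `d` is the ideal of `K` generated by
`∑ᵢ xᵢ yᵢ` and `y₁⋯y_N`.  Since `im(d)` consists exactly of the `K`-multiples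
of `∑ᵢ xᵢ yᵢ`, and the `K`-multiples of `y₁⋯y_N` are its `A[x]`-multiples,
this ideal is `im(d) + A[x₁,…,x_N]·y₁⋯y_N`. -/
theorem stmt_4 (A : Type) [CommRing A] [Algebra ℚ A] (N : ℕ) (f : Kos A N) :
    kosD f = 0 ↔ ∃ (g : Kos A N) (p : MvPolynomial (Fin N) A),
      f = kosD g + (fun S => if S = Finset.univ then p else 0) := by
  constructor
  · intro hf
    refine ⟨kosH (fun T => phi T.card (f T)), C (constantCoeff (f Finset.univ)), ?_⟩
    have hdΦ : kosD (fun T => phi T.card (f T)) = 0 := by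
      funext S
      rw [kosD_phi f S, hf]
      simpa using phi_zero (A := A) (N := N) S.card
    funext S
    have hk := homotopy (fun T => phi T.card (f T)) S
    rw [hdΦ] at hk
    have h0 : kosH (0 : Kos A N) S = 0 := by simp [kosH]
    rw [h0, add_zero] at hk
    have he := euler_phi S (f S)
    show f S = kosD (kosH (fun T => phi T.card (f T))) S + _
    rw [hk, he]
    by_cases hS : S = Finset.univ
    · subst hS
      simp only [if_pos rfl]
      abel
    · simp only [if_neg hS, sub_zero, add_zero]
  · rintro ⟨g, p, rfl⟩
    rw [kosD_add, kosD_kosD, kosD_top, add_zero]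
end
end
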